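/- The polynomial Φ_a ∈ F_p[λ] is nonzero; its root multiplicity at λ = 0 equals max(α(a2+a3−m), 0), and its root multiplicity at λ = 1 equals max(α(a1+a3−m), 0). -/

import Mathlib

open Polynomial

/-- The `a`-Hasse invariant `Φ_a ∈ 𝔽_p[λ]` of a type `a = (a1, a2, a3, a4)` in the mixed case:
`Φ_a(λ) = (-1)^(α a3) ∑_{i+j = α a3} C(α a2*, i) C(α a4*, j) λ^j` where `α = (p-1)/m` and
`a_i* = m - a_i`. -/
noncomputable def HasseInv (p m a2 a3 a4 : ℕ) : Polynomial (ZMod p) :=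
  let α := (p - 1) / m
  C ((-1 : ZMod p) ^ (α * a3)) *
    ∑ j ∈ Finset.range (α * a3 + 1),
      C ((Nat.choose (α * (m - a2)) (α * a3 - j) * Nat.choose (α * (m - a4)) j : ℕ) : ZMod p) *
        X ^ j

/-- A prime `p` does not divide `n.choose k` when `n < p` and `k ≤ n`. -/
lemma choose_not_dvd {p n k : ℕ} (hp : p.Prime) (hn : n < p) (hk : k ≤ n) :
    ¬ p ∣ n.choose k := by
  intro h
  have h2 : p ∣ n.factorial := by
    rw [← Nat.choose_mul_factorial_mul_factorial hk]
    exact (h.mul_right _).mul_right _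
  have := (Nat.Prime.dvd_factorial hp).mp h2
  omega

/-- Unconditional trinomial revision (for `i ≤ j`). -/
lemma choose_trinom (B i j : ℕ) (hij : i ≤ j) :
    B.choose j * j.choose i = B.choose i * (B - i).choose (j - i) := by
  rcases le_or_gt j B with h | h
  · exact Nat.choose_mul hij
  · rw [Nat.choose_eq_zero_of_lt h, zero_mul]
    rcases le_or_gt i B with h2 | h2
    · rw [Nat.choose_eq_zero_of_lt (by omega : B - i < j - i), mul_zero]
    · rw [Nat.choose_eq_zero_of_lt h2, zero_mul]

/-- The key combinatorial identity: the `i`-th coefficient of the Taylor expansion at `1`. -/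
lemma key_sum (A B K i : ℕ) (hiK : i ≤ K) (hiB : i ≤ B) :
    ∑ j ∈ Finset.range (K + 1), A.choose (K - j) * B.choose j * j.choose i
      = B.choose i * (A + B - i).choose (K - i) := by
  have h1 : ∑ j ∈ Finset.range (K + 1), A.choose (K - j) * B.choose j * j.choose i
      = ∑ j ∈ Finset.Ico i (K + 1), A.choose (K - j) * B.choose j * j.choose i := by
    rw [Finset.range_eq_Ico, ← Finset.sum_Ico_consecutive _ (Nat.zero_le i) (by omega)]
    have hz : ∑ j ∈ Finset.Ico 0 i, A.choose (K - j) * B.choose j * j.choose i = 0 :=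
      Finset.sum_eq_zero fun j hj => by
        rw [Nat.choose_eq_zero_of_lt (Finset.mem_Ico.mp hj).2, mul_zero]
    rw [hz, zero_add]
  rw [h1]
  have h2 : ∀ j ∈ Finset.Ico i (K + 1),
      A.choose (K - j) * B.choose j * j.choose i
        = B.choose i * ((B - i).choose (j - i) * A.choose (K - j)) := fun j hj => by
    rw [mul_assoc, choose_trinom B i j (Finset.mem_Ico.mp hj).1]; ring
  rw [Finset.sum_congr rfl h2, ← Finset.mul_sum]
  congr 1
  rw [Finset.sum_Ico_eq_sum_range]
  have hAB : A + B - i = (B - i) + A := by omega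
  rw [hAB, Nat.add_choose_eq, Finset.Nat.sum_antidiagonal_eq_sum_range_succ_mk]
  have hsz : K + 1 - i = (K - i) + 1 := by omega
  rw [hsz]
  apply Finset.sum_congr rfl
  intro t _
  have e1 : i + t - i = t := by omega
  have e2 : K - (i + t) = K - i - t := by omega
  rw [e1, e2]

/-- `Φ_a ≠ 0`; its root multiplicity at `λ = 0` is `max(α(a2+a3-m), 0)` and its
root multiplicity at `λ = 1` is `max(α(a1+a3-m), 0)`. -/
theorem stmt7 (p m a1 a2 a3 a4 : ℕ) (hp : p.Prime) [Fact p.Prime] (hp2 : 2 < p)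
    (hm1 : 1 < m) (hmd : m ∣ p - 1)
    (h1 : 0 < a1 ∧ a1 < m) (h2 : 0 < a2 ∧ a2 < m) (h3 : 0 < a3 ∧ a3 < m)
    (h4 : 0 < a4 ∧ a4 < m) (hsum : a1 + a2 + a3 + a4 = 2 * m) :
    HasseInv p m a2 a3 a4 ≠ 0 ∧
    ((HasseInv p m a2 a3 a4).rootMultiplicity 0 : ℤ) =
      max ((((p - 1) / m : ℕ) : ℤ) * ((a2 : ℤ) + (a3 : ℤ) - (m : ℤ))) 0 ∧
    ((HasseInv p m a2 a3 a4).rootMultiplicity 1 : ℤ) =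
      max ((((p - 1) / m : ℕ) : ℤ) * ((a1 : ℤ) + (a3 : ℤ) - (m : ℤ))) 0 := by
  obtain ⟨h1a, h1b⟩ := h1
  obtain ⟨h2a, h2b⟩ := h2
  obtain ⟨h3a, h3b⟩ := h3
  obtain ⟨h4a, h4b⟩ := h4
  haveI : NeZero p := ⟨hp.pos.ne'⟩
  set α := (p - 1) / m with hα_def
  have hm : α * m = p - 1 := Nat.div_mul_cancel hmd
  have hα1 : 1 ≤ α := by
    rcases Nat.eq_zero_or_pos α with h | h
    · rw [h, zero_mul] at hm; omega
    · exact h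
  set A := α * (m - a2) with hA_def
  set B := α * (m - a4) with hB_def
  set K := α * a3 with hK_def
  set x1 := α * a1 with hx1
  set x2 := α * a2 with hx2
  set x4 := α * a4 with hx4
  -- linear relations among the atoms
  have hA2 : A + x2 = p - 1 := by
    rw [hA_def, hx2, ← Nat.mul_add, Nat.sub_add_cancel (le_of_lt h2b)]; exact hm
  have hB4 : B + x4 = p - 1 := by
    rw [hB_def, hx4, ← Nat.mul_add, Nat.sub_add_cancel (le_of_lt h4b)]; exact hm
  have hsum' : x1 + x2 + K + x4 = 2 * (p - 1) := by
    rw [hx1, hx2, hK_def, hx4,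
      show α * a1 + α * a2 + α * a3 + α * a4 = α * (a1 + a2 + a3 + a4) by ring, hsum,
      show α * (2 * m) = 2 * (α * m) by ring, hm]
  have hbnd : ∀ b, b < m → α * b + α ≤ p - 1 := fun b hb => by
    calc α * b + α = α * (b + 1) := by ring
      _ ≤ α * m := Nat.mul_le_mul_left α (by omega)
      _ = p - 1 := hm
  have hb1 : x1 + α ≤ p - 1 := hbnd a1 h1b
  have hb2 : x2 + α ≤ p - 1 := hbnd a2 h2b
  have hb3 : K + α ≤ p - 1 := hbnd a3 h3b
  have hb4 : x4 + α ≤ p - 1 := hbnd a4 h4b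
  have hmZ : ((p : ℤ) - 1) = (α : ℤ) * m := by
    have := congrArg (Nat.cast : ℕ → ℤ) hm
    push_cast [Nat.cast_sub (by omega : 1 ≤ p)] at this
    exact this.symm
  -- the polynomial
  set c : ℕ → ℕ := fun j => A.choose (K - j) * B.choose j with hc_def
  set S : Polynomial (ZMod p) := ∑ j ∈ Finset.range (K + 1), C ((c j : ZMod p)) * X ^ j
    with hS_def
  have hH : HasseInv p m a2 a3 a4 = C ((-1 : ZMod p) ^ K) * S := rfl
  have hScoeff : ∀ n, S.coeff n = if n ≤ K then ((c n : ℕ) : ZMod p) else 0 := by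
    intro n
    rw [hS_def, Polynomial.finset_sum_coeff]
    simp only [Polynomial.coeff_C_mul, Polynomial.coeff_X_pow, mul_ite, mul_one, mul_zero]
    rw [Finset.sum_ite_eq (Finset.range (K + 1)) n fun j => ((c j : ℕ) : ZMod p)]
    simp [Nat.lt_succ_iff]
  -- multiplicities at 0
  set j0 := x2 + K - (p - 1) with hj0_def
  have hj0K : j0 ≤ K := by omega
  have hcj0 : ¬ p ∣ c j0 := by
    intro hd'
    have hd : p ∣ A.choose (K - j0) * B.choose j0 := hd'
    rcases (Nat.Prime.dvd_mul hp).mp hd with h' | h'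
    · exact choose_not_dvd hp (by omega : A < p) (by omega : K - j0 ≤ A) h'
    · exact choose_not_dvd hp (by omega : B < p) (by omega : j0 ≤ B) h'
  have hvanish0 : ∀ i, i < j0 → c i = 0 := by
    intro i hi
    show A.choose (K - i) * B.choose i = 0
    rw [Nat.choose_eq_zero_of_lt (by omega : A < K - i), zero_mul]
  have hSc0 : S.coeff j0 ≠ 0 := by
    rw [hScoeff, if_pos hj0K]
    intro h
    exact hcj0 ((ZMod.natCast_eq_zero_iff _ _).mp h)
  have hSne : S ≠ 0 := fun h0 => by
    rw [h0, Polynomial.coeff_zero] at hSc0; exact hSc0 rfl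
  have htd0 : S.natTrailingDegree = j0 := by
    refine le_antisymm (Polynomial.natTrailingDegree_le_of_ne_zero hSc0)
      (Polynomial.le_natTrailingDegree hSne fun i hi => ?_)
    rw [hScoeff]
    split
    · rw [hvanish0 i hi]; exact Nat.cast_zero
    · rfl
  -- constant factor
  have hu : ((-1 : ZMod p) ^ K) ≠ 0 := pow_ne_zero _ (by
    intro h
    rw [neg_eq_zero] at h
    exact one_ne_zero h)
  have hCne : (C ((-1 : ZMod p) ^ K)) ≠ 0 := Polynomial.C_ne_zero.mpr hu
  have hrm : ∀ t : ZMod p,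
      (HasseInv p m a2 a3 a4).rootMultiplicity t = S.rootMultiplicity t := by
    intro t
    rw [hH, Polynomial.rootMultiplicity_mul (mul_ne_zero hCne hSne),
      Polynomial.rootMultiplicity_eq_zero
        (fun hr => hu (by simpa [Polynomial.IsRoot] using hr)), zero_add]
  -- multiplicity at 1 via Taylor expansion
  set T := S.comp (X + C (1 : ZMod p)) with hT_def
  have hTcoeff : ∀ n, T.coeff n
      = ((∑ j ∈ Finset.range (K + 1), c j * j.choose n : ℕ) : ZMod p) := by
    intro n
    calc T.coeff n = ∑ j ∈ Finset.range (K + 1), (c j : ZMod p) * (j.choose n : ZMod p) := by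
          rw [hT_def, hS_def, Polynomial.sum_comp, Polynomial.finset_sum_coeff]
          refine Finset.sum_congr rfl fun j _ => ?_
          rw [Polynomial.mul_comp, Polynomial.C_comp, Polynomial.X_pow_comp, Polynomial.C_1,
            Polynomial.coeff_C_mul, Polynomial.coeff_X_add_one_pow]
      _ = _ := by push_cast; ring
  have hABx : A + B = x1 + K := by omega
  have hkey : ∀ i, i ≤ K → i ≤ B →
      (∑ j ∈ Finset.range (K + 1), c j * j.choose i : ℕ)
        = B.choose i * (x1 + K - i).choose (K - i) := by
    intro i hiK hiB
    rw [← hABx]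
    exact key_sum A B K i hiK hiB
  set s := x1 + K - (p - 1) with hs_def
  have hsK : s ≤ K := by omega
  have hsB : s ≤ B := by omega
  have hes : ¬ p ∣ (∑ j ∈ Finset.range (K + 1), c j * j.choose s : ℕ) := by
    rw [hkey s hsK hsB]
    intro hd
    rcases (Nat.Prime.dvd_mul hp).mp hd with h' | h'
    · exact choose_not_dvd hp (by omega : B < p) hsB h'
    · exact choose_not_dvd hp (by omega : x1 + K - s < p)
        (by omega : K - s ≤ x1 + K - s) h'
  have hei : ∀ i, i < s → p ∣ (∑ j ∈ Finset.range (K + 1), c j * j.choose i : ℕ) := by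
    intro i hi
    rw [hkey i (by omega) (by omega)]
    exact Dvd.dvd.mul_left
      (Nat.Prime.dvd_choose hp (by omega : K - i < p)
        (by omega : (x1 + K - i) - (K - i) < p) (by omega : p ≤ x1 + K - i)) _
  have hTcs : T.coeff s ≠ 0 := by
    rw [hTcoeff]
    intro h
    exact hes ((ZMod.natCast_eq_zero_iff _ _).mp h)
  have hTne : T ≠ 0 := fun h0 => by
    rw [h0, Polynomial.coeff_zero] at hTcs; exact hTcs rfl
  have htd1 : T.natTrailingDegree = s := by
    refine le_antisymm (Polynomial.natTrailingDegree_le_of_ne_zero hTcs)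
      (Polynomial.le_natTrailingDegree hTne fun i hi => ?_)
    rw [hTcoeff]
    exact (ZMod.natCast_eq_zero_iff _ _).mpr (hei i hi)
  -- conclusion
  refine ⟨by rw [hH]; exact mul_ne_zero hCne hSne, ?_, ?_⟩
  · rw [hrm 0, Polynomial.rootMultiplicity_eq_natTrailingDegree', htd0]
    have hZ : (α : ℤ) * ((a2 : ℤ) + a3 - m) = (x2 : ℤ) + (K : ℤ) - ((p : ℤ) - 1) := by
      rw [hx2, hK_def, hmZ]; push_cast; ring
    rw [hZ]
    omega
  · rw [hrm 1, Polynomial.rootMultiplicity_eq_natTrailingDegree, ← hT_def, htd1]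
    have hZ : (α : ℤ) * ((a1 : ℤ) + a3 - m) = (x1 : ℤ) + (K : ℤ) - ((p : ℤ) - 1) := by
      rw [hx1, hK_def, hmZ]; push_cast; ring
    rw [hZ]
    omega
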